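/- If V and W are locally countable pseudovarieties of finite semigroups, then their join V ∨ W (the smallest pseudovariety containing both V and W) is locally countable. -/

import Mathlib

/-- A bundled finite semigroup. -/
structure FinSgp : Type 1 where
  carrier : Type
  [str : Semigroup carrier]
  [fin : Finite carrier]

attribute [instance] FinSgp.str FinSgp.fin

/-- Finite semigroups carry the discrete topology. -/
instance (T : FinSgp) : TopologicalSpace T.carrier := ⊥

instance (T : FinSgp) : DiscreteTopology T.carrier := ⟨rfl⟩

/-- A pseudovariety of finite semigroups: a class of finite semigroups closed under
homomorphic images, (isomorphic copies of) subsemigroups, and binary direct products. -/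
def IsPseudovariety (V : Set FinSgp) : Prop :=
  (∀ S ∈ V, ∀ (T : FinSgp) (f : S.carrier →ₙ* T.carrier), Function.Surjective f → T ∈ V) ∧
  (∀ S ∈ V, ∀ (T : FinSgp) (f : T.carrier →ₙ* S.carrier), Function.Injective f → T ∈ V) ∧
  (∀ S ∈ V, ∀ T ∈ V, (FinSgp.mk (S.carrier × T.carrier)) ∈ V)

/-- A profinite semigroup: a compact, Hausdorff, totally disconnected topological semigroup. -/
def IsProfiniteSgp (S : Type) [Semigroup S] [TopologicalSpace S] : Prop :=
  ContinuousMul S ∧ CompactSpace S ∧ T2Space S ∧ TotallyDisconnectedSpace S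

/-- A pro-V semigroup: a profinite semigroup whose points are separated by continuous
homomorphisms onto finite semigroups belonging to V. -/
def IsProV (V : Set FinSgp) (S : Type) [Semigroup S] [TopologicalSpace S] : Prop :=
  IsProfiniteSgp S ∧ ∀ x y : S, x ≠ y →
    ∃ (T : FinSgp) (f : S →ₙ* T.carrier),
      T ∈ V ∧ Continuous f ∧ Function.Surjective f ∧ f x ≠ f y

/-- `A` topologically generates the topological semigroup `S`. -/
def TopGen (S : Type) [Semigroup S] [TopologicalSpace S] (A : Set S) : Prop :=
  closure ((Subsemigroup.closure A : Subsemigroup S) : Set S) = Set.univ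

/-- A topological semigroup is locally countable if every closed subsemigroup
topologically generated by a finite subset is countable. -/
def IsLocCountable (S : Type) [Semigroup S] [TopologicalSpace S] : Prop :=
  ∀ A : Set S, A.Finite →
    (closure ((Subsemigroup.closure A : Subsemigroup S) : Set S)).Countable

/-- A pseudovariety is locally countable if every pro-V semigroup is locally countable. -/
def PVLocallyCountable (V : Set FinSgp) : Prop :=
  ∀ (S : Type) [Semigroup S] [TopologicalSpace S], IsProV V S → IsLocCountable S

/-- A pseudovariety is locally finite if every finitely generated pro-V semigroup is finite. -/
def PVLocallyFinite (V : Set FinSgp) : Prop :=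
  ∀ (S : Type) [Semigroup S] [TopologicalSpace S], IsProV V S →
    (∃ A : Set S, A.Finite ∧ TopGen S A) → Finite S

/-- The join of two pseudovarieties: the smallest pseudovariety containing both. -/
def PVJoin (V W : Set FinSgp) : Set FinSgp :=
  ⋂₀ {U | IsPseudovariety U ∧ V ⊆ U ∧ W ⊆ U}

/-- The preimage of an idempotent under a semigroup homomorphism, as a subsemigroup. -/
def idemFiber {S T : Type} [Semigroup S] [Semigroup T] (f : S →ₙ* T)
    (e : T) (he : e * e = e) : Subsemigroup S where
  carrier := f ⁻¹' {e}
  mul_mem' := fun {a b} ha hb => by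
    simp only [Set.mem_preimage, Set.mem_singleton_iff] at ha hb ⊢
    rw [map_mul, ha, hb, he]

/-- A subsemigroup of a finite semigroup, as a bundled finite semigroup. -/
def subFinSgp {S : Type} [Semigroup S] [Finite S] (T : Subsemigroup S) : FinSgp :=
  FinSgp.mk T

/-- The generators of the Mal'cev product `V ⓜ W`: finite semigroups `S` admitting a
homomorphism onto some `T ∈ W` whose fibers over idempotents lie in `V`. -/
def MalcevWitness (V W : Set FinSgp) (S : FinSgp) : Prop :=
  ∃ (T : FinSgp) (f : S.carrier →ₙ* T.carrier), T ∈ W ∧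
    ∀ (e : T.carrier) (he : e * e = e), subFinSgp (idemFiber f e he) ∈ V

/-- The Mal'cev product of two pseudovarieties: the smallest pseudovariety containing
all its generators. -/
def Malcev (V W : Set FinSgp) : Set FinSgp :=
  ⋂₀ {U | IsPseudovariety U ∧ ∀ S : FinSgp, MalcevWitness V W S → S ∈ U}

/-- Green's preorder `≤_L`. -/
def lLE {S : Type} [Semigroup S] (u v : S) : Prop := u = v ∨ ∃ x, u = x * v

/-- Green's relation `L`. -/
def GreenL {S : Type} [Semigroup S] (u v : S) : Prop := lLE u v ∧ lLE v u

/-- Green's preorder `≤_J`. -/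
def jLE {S : Type} [Semigroup S] (u v : S) : Prop :=
  u = v ∨ (∃ x, u = v * x) ∨ (∃ x, u = x * v) ∨ (∃ x y, u = x * v * y)

/-- Green's relation `J`. -/
def GreenJ {S : Type} [Semigroup S] (u v : S) : Prop := jLE u v ∧ jLE v u

/-- A regular element of a semigroup. -/
def IsRegularElt {S : Type} [Semigroup S] (s : S) : Prop := ∃ t, s = s * t * s

/-- `S` has only finitely many regular `J`-classes. -/
def FinManyRegJ (S : Type) [Semigroup S] : Prop :=
  ∃ F : Set S, F.Finite ∧ ∀ s : S, IsRegularElt s → ∃ t ∈ F, GreenJ s t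

/-- A subgroup of a semigroup: a subsemigroup which is a group under the induced
multiplication. -/
def IsSgpSubgroup (S : Type) [Semigroup S] (G : Set S) : Prop :=
  (∀ x ∈ G, ∀ y ∈ G, x * y ∈ G) ∧
  ∃ e ∈ G, (∀ x ∈ G, e * x = x ∧ x * e = x) ∧ (∀ x ∈ G, ∃ y ∈ G, x * y = e ∧ y * x = e)

/-- A group element of a semigroup: an element lying in some subgroup. -/
def IsGroupElt (S : Type) [Semigroup S] (s : S) : Prop :=
  ∃ G : Set S, IsSgpSubgroup S G ∧ s ∈ G

/-- `prodFrom f n` is the product `f 0 * f 1 * ⋯ * f n`. -/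
def prodFrom {S : Type} [Semigroup S] (f : ℕ → S) : ℕ → S
  | 0 => f 0
  | n + 1 => prodFrom f n * f (n + 1)

/-- A semigroup is nilpotent if it has a zero element and some length bound beyond
which all products equal zero. -/
def IsNilpotentSgp (S : Type) [Semigroup S] : Prop :=
  ∃ z : S, (∀ x : S, z * x = z ∧ x * z = z) ∧ ∃ n : ℕ, ∀ f : ℕ → S, prodFrom f n = z

/-- The pseudovariety `N` of finite nilpotent semigroups. -/
def NPv : Set FinSgp := {S | IsNilpotentSgp S.carrier}

/-- A semigroup which is a group. -/
def IsGroupSgp (S : Type) [Semigroup S] : Prop :=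
  ∃ e : S, (∀ x : S, e * x = x ∧ x * e = x) ∧ ∀ x : S, ∃ y : S, x * y = e ∧ y * x = e

/-- The pseudovariety `LG` of finite local groups: `eSe` is a group for each idempotent `e`. -/
def LG : Set FinSgp :=
  {S | ∀ e : S.carrier, e * e = e → ∀ s : S.carrier,
      ∃ t : S.carrier, (e * s * e) * (e * t * e) = e ∧ (e * t * e) * (e * s * e) = e}

/-- The pseudovariety `IE` of finite semigroups with exactly one idempotent. -/
def IE : Set FinSgp := {S | ∃! e : S.carrier, e * e = e}

/-- A bundled topological semigroup (carrier, multiplication, topology). -/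
structure TopSgp : Type 1 where
  carrier : Type
  [str : Semigroup carrier]
  [top : TopologicalSpace carrier]

attribute [instance] TopSgp.str TopSgp.top

/-- The fiber of a relational morphism over an idempotent, as a subsemigroup of the
domain. -/
def relFiber {S T : Type} [Semigroup S] [Semigroup T] (μ : Subsemigroup (S × T))
    (e : T) (he : e * e = e) : Subsemigroup S where
  carrier := {s | (s, e) ∈ μ}
  mul_mem' := fun {a b} ha hb => by
    have h := μ.mul_mem ha hb
    simpa [Prod.mk_mul_mk, he] using h

/-- `spow x n = x ^ (n + 1)` in a semigroup. -/
def spow {S : Type} [Semigroup S] (x : S) : ℕ → S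
  | 0 => x
  | n + 1 => spow x n * x

/-- The pseudovariety `A ∩ ESl` of finite aperiodic semigroups with commuting idempotents. -/
def AESl : Set FinSgp :=
  {S | (∃ n : ℕ, ∀ x : S.carrier, spow x (n + 1) = spow x n) ∧
       (∀ e f : S.carrier, e * e = e → f * f = f → e * f = f * e)}


section JoinLC

open Set Topology

/-- An index: a finite semigroup structure on `Fin k` together with a generator
assignment from an alphabet `α`. -/
structure PreIdx (α : Type) : Type where
  k : ℕ
  mul : Fin k → Fin k → Fin k
  assoc : ∀ a b c, mul (mul a b) c = mul a (mul b c)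
  gen : α → Fin k

namespace PreIdx

variable {α : Type}

/-- The carrier of an index. -/
def Car (i : PreIdx α) : Type := Fin i.k

instance (i : PreIdx α) : Semigroup i.Car := { mul := i.mul, mul_assoc := i.assoc }

instance (i : PreIdx α) : Finite i.Car := inferInstanceAs (Finite (Fin i.k))

instance (i : PreIdx α) : TopologicalSpace i.Car := ⊥

instance (i : PreIdx α) : DiscreteTopology i.Car := ⟨rfl⟩

instance (i : PreIdx α) : ContinuousMul i.Car := ⟨continuous_of_discreteTopology⟩

lemma car_mul_def (i : PreIdx α) (x y : i.Car) : x * y = i.mul x y := rfl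

/-- The bundled finite semigroup of an index. -/
def sgp (i : PreIdx α) : FinSgp := FinSgp.mk i.Car

lemma sgp_mk (i : PreIdx α) {β : Type} (τ : β → Fin i.k) :
    (PreIdx.mk i.k i.mul i.assoc τ).sgp = i.sgp := rfl

end PreIdx

/-- Transport a finite semigroup `T` with a generator assignment `τ` to an index. -/
def mkIdx {α : Type} (T : FinSgp) {k : ℕ} (e : T.carrier ≃ Fin k) (τ : α → T.carrier) :
    PreIdx α where
  k := k
  mul x y := e (e.symm x * e.symm y)
  assoc a b c := by simp only [Equiv.symm_apply_apply]; rw [mul_assoc]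
  gen m := e (τ m)

/-- The isomorphism from an `mkIdx` carrier back to the original semigroup. -/
def mkIdxHom {α : Type} (T : FinSgp) {k : ℕ} (e : T.carrier ≃ Fin k) (τ : α → T.carrier) :
    (mkIdx T e τ).Car →ₙ* T.carrier where
  toFun x := e.symm x
  map_mul' x y := by
    show e.symm ((mkIdx T e τ).mul x y) = e.symm x * e.symm y
    simp [mkIdx]

lemma mkIdxHom_injective {α : Type} (T : FinSgp) {k : ℕ} (e : T.carrier ≃ Fin k)
    (τ : α → T.carrier) : Function.Injective (mkIdxHom T e τ) :=
  fun _ _ h => e.symm.injective h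

lemma mkIdx_mem {U : Set FinSgp} (hU : IsPseudovariety U) {T : FinSgp} (hT : T ∈ U)
    {α : Type} {k : ℕ} (e : T.carrier ≃ Fin k) (τ : α → T.carrier) :
    (mkIdx T e τ).sgp ∈ U :=
  hU.2.1 T hT _ (mkIdxHom T e τ) (mkIdxHom_injective T e τ)

/-- The good indices for a class `U`. -/
def GIdx (U : Set FinSgp) (α : Type) : Type := {i : PreIdx α // i.sgp ∈ U}

/-- The big product of all good indices. -/
def PP (U : Set FinSgp) (α : Type) : Type := ∀ j : GIdx U α, j.val.Car

instance (U : Set FinSgp) (α : Type) : Semigroup (PP U α) :=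
  inferInstanceAs (Semigroup (∀ j : GIdx U α, j.val.Car))

instance (U : Set FinSgp) (α : Type) : TopologicalSpace (PP U α) :=
  inferInstanceAs (TopologicalSpace (∀ j : GIdx U α, j.val.Car))

instance (U : Set FinSgp) (α : Type) : CompactSpace (PP U α) :=
  inferInstanceAs (CompactSpace (∀ j : GIdx U α, j.val.Car))

instance (U : Set FinSgp) (α : Type) : T2Space (PP U α) :=
  inferInstanceAs (T2Space (∀ j : GIdx U α, j.val.Car))

instance (U : Set FinSgp) (α : Type) : TotallyDisconnectedSpace (PP U α) :=
  inferInstanceAs (TotallyDisconnectedSpace (∀ j : GIdx U α, j.val.Car))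

instance (U : Set FinSgp) (α : Type) : ContinuousMul (PP U α) :=
  inferInstanceAs (ContinuousMul (∀ j : GIdx U α, j.val.Car))

/-- Coordinate projection as a `MulHom`. -/
def coordHom {U : Set FinSgp} {α : Type} (j : GIdx U α) : PP U α →ₙ* j.val.Car :=
  ⟨fun p => p j, fun _ _ => rfl⟩

/-- The canonical generators of the big product. -/
def genP (U : Set FinSgp) {α : Type} (m : α) : PP U α := fun j => j.val.gen m

/-- The free pro-`U` semigroup over `α` as a closed subsemigroup of the big product. -/
def FS (U : Set FinSgp) (α : Type) : Subsemigroup (PP U α) :=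
  (Subsemigroup.closure (Set.range (genP U (α := α)))).topologicalClosure

lemma FS_coe (U : Set FinSgp) (α : Type) :
    (FS U α : Set (PP U α)) =
      closure ((Subsemigroup.closure (Set.range (genP U (α := α))) : Subsemigroup (PP U α)) :
        Set (PP U α)) := rfl

lemma genP_mem (U : Set FinSgp) {α : Type} (m : α) : genP U m ∈ FS U α :=
  (Subsemigroup.closure (Set.range (genP U (α := α)))).le_topologicalClosure
    (Subsemigroup.subset_closure ⟨m, rfl⟩)

/-- The generators, as elements of the free object. -/
def genF (U : Set FinSgp) (α : Type) (m : α) : ↥(FS U α) := ⟨genP U m, genP_mem U m⟩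

/-- Every subset of a bundled finite semigroup carrier is open. -/
lemma isOpen_finSgp (T : FinSgp) (s : Set T.carrier) : IsOpen s := isOpen_discrete s

/-- Continuity into a bundled finite semigroup from open point preimages. -/
lemma continuous_into_finSgp {X : Type} [TopologicalSpace X] (T : FinSgp) (f : X → T.carrier)
    (h : ∀ b, IsOpen (f ⁻¹' {b})) : Continuous f := by
  refine continuous_def.mpr fun s _ => ?_
  have hs : f ⁻¹' s = ⋃ b ∈ s, f ⁻¹' {b} := by
    ext x; simp
  rw [hs]
  exact isOpen_biUnion fun b _ => h b

/-- The free object is topologically generated by the generators. -/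
lemma closure_genF (U : Set FinSgp) (α : Type) :
    closure ((Subsemigroup.closure (Set.range (genF U α)) : Subsemigroup ↥(FS U α)) :
      Set ↥(FS U α)) = Set.univ := by
  apply Set.eq_univ_of_forall
  intro x
  have hle : Subsemigroup.closure (Set.range (genP U (α := α))) ≤
      Subsemigroup.map (MulMemClass.subtype (FS U α))
        (Subsemigroup.closure (Set.range (genF U α))) := by
    rw [Subsemigroup.closure_le]
    rintro _ ⟨m, rfl⟩
    exact ⟨genF U α m, Subsemigroup.subset_closure ⟨m, rfl⟩, rfl⟩
  have hsubset : ((Subsemigroup.closure (Set.range (genP U (α := α))) :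
        Subsemigroup (PP U α)) : Set (PP U α)) ⊆
      Subtype.val '' ((Subsemigroup.closure (Set.range (genF U α)) :
        Subsemigroup ↥(FS U α)) : Set ↥(FS U α)) := by
    intro z hz
    obtain ⟨y, hy, hyz⟩ := hle hz
    exact ⟨y, hy, hyz⟩
  have hx : (x : PP U α) ∈
      closure ((Subsemigroup.closure (Set.range (genP U (α := α))) :
        Subsemigroup (PP U α)) : Set (PP U α)) := x.2
  have hmem := closure_mono hsubset hx
  rw [Topology.IsInducing.subtypeVal.closure_eq_preimage_closure_image]
  exact hmem

/-- Two continuous homomorphisms from the free object agreeing on the generators agree. -/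
lemma hom_ext {U : Set FinSgp} {α : Type} {T : Type} [Semigroup T] [TopologicalSpace T]
    [T2Space T] (φ ψ : ↥(FS U α) →ₙ* T) (hφ : Continuous φ) (hψ : Continuous ψ)
    (h : ∀ m, φ (genF U α m) = ψ (genF U α m)) : ∀ x, φ x = ψ x := by
  intro x
  have hx : x ∈ closure ((Subsemigroup.closure (Set.range (genF U α)) :
      Subsemigroup ↥(FS U α)) : Set ↥(FS U α)) := by
    rw [closure_genF]; trivial
  have hsub : ((Subsemigroup.closure (Set.range (genF U α)) : Subsemigroup ↥(FS U α)) :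
      Set ↥(FS U α)) ⊆ {y | φ y = ψ y} := by
    intro y hy
    induction hy using Subsemigroup.closure_induction with
    | mem y hy => obtain ⟨m, rfl⟩ := hy; exact h m
    | mul y z _ _ hy hz => show φ (y * z) = ψ (y * z); rw [map_mul, map_mul, hy, hz]
  exact closure_minimal hsub (isClosed_eq hφ hψ) hx

/-- Image of the closed subsemigroup generated by `s` under a continuous hom. -/
lemma image_closure_sgen {X Y : Type} [Semigroup X] [TopologicalSpace X] [CompactSpace X]
    [Semigroup Y] [TopologicalSpace Y] [T2Space Y]
    (f : X →ₙ* Y) (hf : Continuous f) (s : Set X) :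
    f '' closure ((Subsemigroup.closure s : Subsemigroup X) : Set X)
      = closure ((Subsemigroup.closure (f '' s) : Subsemigroup Y) : Set Y) := by
  have hset : f '' ((Subsemigroup.closure s : Subsemigroup X) : Set X) =
      ((Subsemigroup.closure (f '' s) : Subsemigroup Y) : Set Y) := by
    rw [← Subsemigroup.coe_map, MulHom.map_mclosure]
  apply Set.Subset.antisymm
  · refine (image_closure_subset_closure_image hf).trans ?_
    exact closure_mono (le_of_eq hset)
  · apply closure_minimal
    · rw [← hset]
      exact Set.image_mono subset_closure
    · exact (isClosed_closure.isCompact.image hf).isClosed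

lemma FS_isCompact (U : Set FinSgp) (α : Type) : IsCompact (FS U α : Set (PP U α)) := by
  rw [FS_coe]; exact isClosed_closure.isCompact

instance (U : Set FinSgp) (α : Type) : CompactSpace ↥(FS U α) :=
  isCompact_iff_compactSpace.mp (FS_isCompact U α)

/-- The free object is a pro-`U` semigroup. -/
lemma isProV_FS {U : Set FinSgp} (hU : IsPseudovariety U) (α : Type) :
    IsProV U ↥(FS U α) := by
  refine ⟨⟨inferInstance, inferInstance, inferInstance, inferInstance⟩, ?_⟩
  intro x y hxy
  have hne : (x : PP U α) ≠ y := fun h => hxy (Subtype.ext h)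
  obtain ⟨j, hj⟩ := Function.ne_iff.mp hne
  set φ : ↥(FS U α) →ₙ* j.val.Car :=
    (coordHom j).comp (MulMemClass.subtype (FS U α)) with hφdef
  have hφc : Continuous φ := (continuous_apply j).comp continuous_subtype_val
  refine ⟨FinSgp.mk ↥φ.srange, φ.srangeRestrict, ?_, ?_, ?_, ?_⟩
  · exact hU.2.1 j.val.sgp j.prop _ (MulMemClass.subtype φ.srange) Subtype.coe_injective
  · refine continuous_into_finSgp _ _ fun b => ?_
    have hpre : (fun z => φ.srangeRestrict z) ⁻¹' {b} = φ ⁻¹' {(b : j.val.Car)} := by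
      ext z
      simp only [Set.mem_preimage, Set.mem_singleton_iff, Subtype.ext_iff]
      rfl
    rw [hpre]
    exact hφc.isOpen_preimage _ (isOpen_discrete _)
  · exact MulHom.srangeRestrict_surjective φ
  · intro h
    exact hj (congrArg Subtype.val h)

/-- The free pro-`U` semigroup over a finite alphabet is countable when `U` is locally
countable. -/
lemma FS_countable {U : Set FinSgp} (hU : IsPseudovariety U) (hUc : PVLocallyCountable U)
    (n : ℕ) : ((FS U (Fin n) : Set (PP U (Fin n)))).Countable := by
  have hloc := hUc ↥(FS U (Fin n)) (isProV_FS hU (Fin n))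
  have h := hloc (Set.range (genF U (Fin n))) (Set.finite_range _)
  rw [closure_genF] at h
  have : Countable ↥(FS U (Fin n)) := Set.countable_univ_iff.mp h
  exact Set.countable_coe_iff.mp this

/-- Realizing a generator assignment into a finite semigroup by a continuous hom on the
free object, given a good index witnessing it. -/
lemma helper_lift {U : Set FinSgp} {α : Type} {T : FinSgp} {k : ℕ}
    (e : T.carrier ≃ Fin k) (t : α → T.carrier) (hm : (mkIdx T e t).sgp ∈ U) :
    ∃ ψ : ↥(FS U α) →ₙ* T.carrier, Continuous ψ ∧ (∀ m, ψ (genF U α m) = t m) ∧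
      ∀ x : ↥(FS U α), ψ x = e.symm ((x : PP U α) ⟨mkIdx T e t, hm⟩) := by
  refine ⟨(mkIdxHom T e t).comp
      ((coordHom ⟨mkIdx T e t, hm⟩).comp (MulMemClass.subtype (FS U α))), ?_, ?_,
      fun x => rfl⟩
  · have h1 : Continuous (mkIdxHom T e t) := continuous_of_discreteTopology
    exact h1.comp ((continuous_apply _).comp continuous_subtype_val)
  · intro m
    show e.symm ((mkIdx T e t).gen m) = t m
    exact e.symm_apply_apply _

/-- The key freeness/injectivity lemma: points of the free pro-`U` object which cannot be
separated over `V` nor over `W` are equal, when `U` is the join of `V` and `W`. -/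
lemma free_inj {V W Uu : Set FinSgp} (hV : IsPseudovariety V) (hW : IsPseudovariety W)
    (hU : IsPseudovariety Uu) (hVU : V ⊆ Uu) (hWU : W ⊆ Uu)
    (hmin : ∀ K : Set FinSgp, IsPseudovariety K → V ⊆ K → W ⊆ K → Uu ⊆ K)
    {α : Type} (p q : ↥(FS Uu α))
    (hVsep : ∀ j : GIdx V α, (p : PP Uu α) ⟨j.val, hVU j.prop⟩ =
      (q : PP Uu α) ⟨j.val, hVU j.prop⟩)
    (hWsep : ∀ j : GIdx W α, (p : PP Uu α) ⟨j.val, hWU j.prop⟩ =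
      (q : PP Uu α) ⟨j.val, hWU j.prop⟩) : p = q := by
  classical
  set K : Set FinSgp :=
    {T | T ∈ Uu ∧ ∀ φ : ↥(FS Uu α) →ₙ* T.carrier, Continuous φ → φ p = φ q} with hKdef
  have hVK : V ⊆ K := by
    intro T hT
    refine ⟨hVU hT, fun φ hφ => ?_⟩
    obtain ⟨k, ⟨e⟩⟩ := Finite.exists_equiv_fin T.carrier
    have hmV : (mkIdx T e (fun m => φ (genF Uu α m))).sgp ∈ V := mkIdx_mem hV hT e _
    obtain ⟨ψ, hc, hg, hval⟩ := helper_lift (U := Uu) e (fun m => φ (genF Uu α m)) (hVU hmV)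
    have heq := hom_ext φ ψ hφ hc (fun m => (hg m).symm)
    rw [heq p, heq q, hval p, hval q, hVsep ⟨mkIdx T e _, hmV⟩]
  have hWK : W ⊆ K := by
    intro T hT
    refine ⟨hWU hT, fun φ hφ => ?_⟩
    obtain ⟨k, ⟨e⟩⟩ := Finite.exists_equiv_fin T.carrier
    have hmW : (mkIdx T e (fun m => φ (genF Uu α m))).sgp ∈ W := mkIdx_mem hW hT e _
    obtain ⟨ψ, hc, hg, hval⟩ := helper_lift (U := Uu) e (fun m => φ (genF Uu α m)) (hWU hmW)
    have heq := hom_ext φ ψ hφ hc (fun m => (hg m).symm)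
    rw [heq p, heq q, hval p, hval q, hWsep ⟨mkIdx T e _, hmW⟩]
  have hK : IsPseudovariety K := by
    refine ⟨?_, ?_, ?_⟩
    · -- quotients
      rintro T ⟨hTU, hTsep⟩ T2 g hg
      refine ⟨hU.1 T hTU T2 g hg, fun φ hφ => ?_⟩
      have hlift : ∀ m, ∃ x : T.carrier, g x = φ (genF Uu α m) := fun m => hg _
      choose t ht using hlift
      obtain ⟨k, ⟨e⟩⟩ := Finite.exists_equiv_fin T.carrier
      have hmU : (mkIdx T e t).sgp ∈ Uu := mkIdx_mem hU hTU e t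
      obtain ⟨ψ, hc, hgen, -⟩ := helper_lift (U := Uu) e t hmU
      have hgc : Continuous (⇑g : T.carrier → T2.carrier) := continuous_of_discreteTopology
      have hgψ : Continuous (g.comp ψ) := hgc.comp hc
      have heq := hom_ext φ (g.comp ψ) hφ hgψ
        (fun m => by show φ _ = g (ψ _); rw [hgen m, ht m])
      rw [heq p, heq q]
      show g (ψ p) = g (ψ q)
      rw [hTsep ψ hc]
    · -- subsemigroups
      rintro T ⟨hTU, hTsep⟩ T2 f hf
      refine ⟨hU.2.1 T hTU T2 f hf, fun φ hφ => ?_⟩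
      have hfc : Continuous (⇑f : T2.carrier → T.carrier) := continuous_of_discreteTopology
      exact hf (hTsep (f.comp φ) (hfc.comp hφ))
    · -- products
      rintro T1 ⟨hT1U, hT1sep⟩ T2 ⟨hT2U, hT2sep⟩
      refine ⟨hU.2.2 T1 hT1U T2 hT2U, fun φ hφ => ?_⟩
      have htopeq : (instTopologicalSpaceProd : TopologicalSpace (T1.carrier × T2.carrier)) = ⊥ :=
        DiscreteTopology.eq_bot
      have hphi' : Continuous (fun x : ↥(FS Uu α) => (φ x : T1.carrier × T2.carrier)) := by
        rw [htopeq]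
        exact hφ
      have h1cont : Continuous ((MulHom.fst T1.carrier T2.carrier).comp φ) :=
        continuous_fst.comp hphi'
      have h2cont : Continuous ((MulHom.snd T1.carrier T2.carrier).comp φ) :=
        continuous_snd.comp hphi'
      have h1 := hT1sep ((MulHom.fst T1.carrier T2.carrier).comp φ) h1cont
      have h2 := hT2sep ((MulHom.snd T1.carrier T2.carrier).comp φ) h2cont
      exact Prod.ext h1 h2
  have hUK : Uu ⊆ K := hmin K hK hVK hWK
  apply Subtype.ext
  funext j
  have hj : j.val.sgp ∈ K := hUK j.prop
  exact hj.2 ((coordHom j).comp (MulMemClass.subtype (FS Uu α)))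
    ((continuous_apply j).comp continuous_subtype_val)

/-- Good indices over the ambient semigroup `S` itself: the generator assignment is a
continuous homomorphism. -/
def CGood (U : Set FinSgp) (S : Type) [Semigroup S] [TopologicalSpace S]
    (i : PreIdx S) : Prop :=
  i.sgp ∈ U ∧ (∀ x y : S, i.gen (x * y) = i.mul (i.gen x) (i.gen y)) ∧
    ∀ v, IsOpen (i.gen ⁻¹' {v})

/-- The type of good indices over `S`. -/
def CIdx (U : Set FinSgp) (S : Type) [Semigroup S] [TopologicalSpace S] : Type :=
  {i : PreIdx S // CGood U S i}

/-- The big product over the good indices over `S`. -/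
def PC (U : Set FinSgp) (S : Type) [Semigroup S] [TopologicalSpace S] : Type :=
  ∀ c : CIdx U S, c.val.Car

instance (U : Set FinSgp) (S : Type) [Semigroup S] [TopologicalSpace S] :
    Semigroup (PC U S) := inferInstanceAs (Semigroup (∀ c : CIdx U S, c.val.Car))

instance (U : Set FinSgp) (S : Type) [Semigroup S] [TopologicalSpace S] :
    TopologicalSpace (PC U S) :=
  inferInstanceAs (TopologicalSpace (∀ c : CIdx U S, c.val.Car))

instance (U : Set FinSgp) (S : Type) [Semigroup S] [TopologicalSpace S] :
    T2Space (PC U S) := inferInstanceAs (T2Space (∀ c : CIdx U S, c.val.Car))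

/-- The canonical map from `S` into the big product over its good indices. -/
def ThetaHom (U : Set FinSgp) (S : Type) [Semigroup S] [TopologicalSpace S] :
    S →ₙ* PC U S where
  toFun s := fun c => c.val.gen s
  map_mul' x y := funext fun c => c.prop.2.1 x y

lemma ThetaHom_continuous (U : Set FinSgp) (S : Type) [Semigroup S] [TopologicalSpace S] :
    Continuous (ThetaHom U S) := by
  refine continuous_pi fun c => continuous_discrete_rng.mpr fun b => ?_
  exact c.prop.2.2 b

lemma ThetaHom_injective {U : Set FinSgp} {S : Type} [Semigroup S] [TopologicalSpace S]
    (hU : IsPseudovariety U)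
    (hsep : ∀ x y : S, x ≠ y → ∃ (T : FinSgp) (f : S →ₙ* T.carrier),
      T ∈ U ∧ Continuous f ∧ Function.Surjective f ∧ f x ≠ f y) :
    Function.Injective (ThetaHom U S) := by
  intro x y hxy
  by_contra hne
  obtain ⟨T, f, hT, hfc, -, hfneq⟩ := hsep x y hne
  obtain ⟨k, ⟨e⟩⟩ := Finite.exists_equiv_fin T.carrier
  have hgood : CGood U S (mkIdx T e f) := by
    refine ⟨mkIdx_mem hU hT e f, ?_, ?_⟩
    · intro a b
      show e (f (a * b)) = e (e.symm (e (f a)) * e.symm (e (f b)))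
      rw [map_mul, e.symm_apply_apply, e.symm_apply_apply]
    · intro v
      have hpre : (mkIdx T e f).gen ⁻¹' {v} = f ⁻¹' {e.symm v} := by
        ext z
        show e (f z) = v ↔ f z = e.symm v
        constructor
        · intro h; rw [← h, e.symm_apply_apply]
        · intro h; rw [h]; exact e.apply_symm_apply v
      rw [hpre]
      exact hfc.isOpen_preimage _ (isOpen_discrete _)
  have := congrFun hxy ⟨mkIdx T e f, hgood⟩
  exact hfneq (e.injective this)

/-- Reindexing: every good index over `S` gives a good index over the alphabet, via the
generator map `a`. -/
def reIdx {U : Set FinSgp} {S : Type} [Semigroup S] [TopologicalSpace S] {n : ℕ}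
    (a : Fin n → S) (c : CIdx U S) : GIdx U (Fin n) :=
  ⟨⟨c.val.k, c.val.mul, c.val.assoc, fun m => c.val.gen (a m)⟩, by
    have h := c.prop.1
    rwa [show (PreIdx.mk c.val.k c.val.mul c.val.assoc fun m => c.val.gen (a m)).sgp
      = c.val.sgp from rfl]⟩

/-- The comparison map from the free product to the product over `S`'s indices. -/
def rhoHom (U : Set FinSgp) (S : Type) [Semigroup S] [TopologicalSpace S] {n : ℕ}
    (a : Fin n → S) : PP U (Fin n) →ₙ* PC U S :=
  ⟨fun p c => p (reIdx a c), fun _ _ => rfl⟩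

lemma rhoHom_continuous (U : Set FinSgp) (S : Type) [Semigroup S] [TopologicalSpace S]
    {n : ℕ} (a : Fin n → S) : Continuous (rhoHom U S a) :=
  continuous_pi fun c => continuous_apply _

lemma rhoHom_gen (U : Set FinSgp) (S : Type) [Semigroup S] [TopologicalSpace S]
    {n : ℕ} (a : Fin n → S) (m : Fin n) :
    rhoHom U S a (genP U m) = ThetaHom U S (a m) := rfl

/-- Reindexing to a smaller pseudovariety. -/
def reVHom {V Uu : Set FinSgp} (hVU : V ⊆ Uu) (α : Type) : PP Uu α →ₙ* PP V α :=
  ⟨fun p j => p ⟨j.val, hVU j.prop⟩, fun _ _ => rfl⟩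

lemma reVHom_continuous {V Uu : Set FinSgp} (hVU : V ⊆ Uu) (α : Type) :
    Continuous (reVHom hVU α) := continuous_pi fun j => continuous_apply _

lemma reVHom_image {V Uu : Set FinSgp} (hVU : V ⊆ Uu) (n : ℕ) :
    reVHom hVU (Fin n) '' (FS Uu (Fin n) : Set (PP Uu (Fin n)))
      = (FS V (Fin n) : Set (PP V (Fin n))) := by
  rw [FS_coe, FS_coe, image_closure_sgen _ (reVHom_continuous hVU (Fin n))]
  congr 3
  rw [← Set.range_comp]
  rfl

/-- The main engine: a pseudovariety squeezed between `V ∪ W` and every pseudovariety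
containing `V` and `W` is locally countable whenever `V` and `W` are. -/
theorem key_locallyCountable (V W Uu : Set FinSgp) (hV : IsPseudovariety V)
    (hW : IsPseudovariety W) (hU : IsPseudovariety Uu) (hVU : V ⊆ Uu) (hWU : W ⊆ Uu)
    (hmin : ∀ K : Set FinSgp, IsPseudovariety K → V ⊆ K → W ⊆ K → Uu ⊆ K)
    (hVc : PVLocallyCountable V) (hWc : PVLocallyCountable W) :
    PVLocallyCountable Uu := by
  intro S _ _ hS
  obtain ⟨⟨hCM, hComp, hT2, hTD⟩, hsep⟩ := hS
  haveI := hCM; haveI := hComp; haveI := hT2; haveI := hTD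
  intro A hA
  obtain ⟨n, a, -, rfl⟩ := hA.fin_param
  -- countability of the free pro-`Uu` object over `Fin n`
  have hFV : ((FS V (Fin n) : Set (PP V (Fin n)))).Countable := FS_countable hV hVc n
  have hFW : ((FS W (Fin n) : Set (PP W (Fin n)))).Countable := FS_countable hW hWc n
  have hinj : Set.InjOn (fun p => (reVHom hVU (Fin n) p, reVHom hWU (Fin n) p))
      (FS Uu (Fin n) : Set (PP Uu (Fin n))) := by
    intro p hp q hq h
    have h1 := congrArg Prod.fst h
    have h2 := congrArg Prod.snd h
    have := free_inj hV hW hU hVU hWU hmin (⟨p, hp⟩ : ↥(FS Uu (Fin n))) ⟨q, hq⟩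
      (fun j => congrFun h1 j) (fun j => congrFun h2 j)
    exact congrArg Subtype.val this
  have hFc : ((FS Uu (Fin n) : Set (PP Uu (Fin n)))).Countable := by
    refine Set.MapsTo.countable_of_injOn (t := (FS V (Fin n) : Set _) ×ˢ
      (FS W (Fin n) : Set _)) ?_ hinj (hFV.prod hFW)
    intro p hp
    constructor
    · rw [← reVHom_image hVU n]; exact Set.mem_image_of_mem _ hp
    · rw [← reVHom_image hWU n]; exact Set.mem_image_of_mem _ hp
  -- transfer to `S`
  have hθc := ThetaHom_continuous Uu S
  have hθinj := ThetaHom_injective hU hsep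
  have hρgen : rhoHom Uu S a '' Set.range (genP Uu (α := Fin n))
      = ThetaHom Uu S '' Set.range a := by
    rw [← Set.range_comp, ← Set.range_comp]
    rfl
  have himg : ThetaHom Uu S ''
        closure ((Subsemigroup.closure (Set.range a) : Subsemigroup S) : Set S)
      = rhoHom Uu S a '' (FS Uu (Fin n) : Set (PP Uu (Fin n))) := by
    rw [image_closure_sgen _ hθc, FS_coe,
      image_closure_sgen _ (rhoHom_continuous Uu S a), hρgen]
  have hCimg : (ThetaHom Uu S ''
      closure ((Subsemigroup.closure (Set.range a) : Subsemigroup S) : Set S)).Countable := by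
    rw [himg]
    exact hFc.image _
  have hsub : closure ((Subsemigroup.closure (Set.range a) : Subsemigroup S) : Set S)
      ⊆ ThetaHom Uu S ⁻¹' (ThetaHom Uu S ''
        closure ((Subsemigroup.closure (Set.range a) : Subsemigroup S) : Set S)) :=
    Set.subset_preimage_image _ _
  exact ((hCimg.preimage hθinj).mono hsub)

end JoinLC


/-- If `V` and `W` are locally countable pseudovarieties of finite
semigroups, then so is their join `V ∨ W`. -/
theorem join_locallyCountable (V W : Set FinSgp)
    (hV : IsPseudovariety V) (hW : IsPseudovariety W)
    (hVc : PVLocallyCountable V) (hWc : PVLocallyCountable W) :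
    PVLocallyCountable (PVJoin V W) := by
  have huniv : IsPseudovariety (Set.univ : Set FinSgp) :=
    ⟨fun _ _ T _ _ => trivial, fun _ _ T _ _ => trivial, fun _ _ _ _ => trivial⟩
  have hU : IsPseudovariety (PVJoin V W) := by
    refine ⟨?_, ?_, ?_⟩
    · intro S hS T f hf
      exact Set.mem_sInter.mpr fun K hK => hK.1.1 S (Set.mem_sInter.mp hS K hK) T f hf
    · intro S hS T f hf
      exact Set.mem_sInter.mpr fun K hK => hK.1.2.1 S (Set.mem_sInter.mp hS K hK) T f hf
    · intro S hS T hT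
      exact Set.mem_sInter.mpr fun K hK =>
        hK.1.2.2 S (Set.mem_sInter.mp hS K hK) T (Set.mem_sInter.mp hT K hK)
  have hVU : V ⊆ PVJoin V W := fun T hT =>
    Set.mem_sInter.mpr fun K hK => hK.2.1 hT
  have hWU : W ⊆ PVJoin V W := fun T hT =>
    Set.mem_sInter.mpr fun K hK => hK.2.2 hT
  have hmin : ∀ K : Set FinSgp, IsPseudovariety K → V ⊆ K → W ⊆ K → PVJoin V W ⊆ K :=
    fun K hK h1 h2 T hT => Set.mem_sInter.mp hT K ⟨hK, h1, h2⟩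
  exact key_locallyCountable V W (PVJoin V W) hV hW hU hVU hWU hmin hVc hWc
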